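/- The elapsed-months window test and the end-of-window test for an 18-month window are not equivalent: for base = (2025, 3, 31) and event = (2026, 9, 30), both dates are valid, base ≤ event, the adjusted elapsed-month count e = 12·(2026 − 2025) + (9 − 3) − 1 = 17 (the subtraction of 1 applies because the day of event, 30, is less than the day of base, 31) satisfies e < 18, yet base +P (0, 18, 0) = (2026, 9, 30) = event, so event < base +P (0, 18, 0) is false. -/
import Mathlib


/-- A date is a triple of integers (year, month, day). -/
structure Date where
  y : ℤ
  m : ℤ
  d : ℤ

/-- A year is a leap year iff divisible by 4 and (not by 100, or by 400). -/
def isLeap (y : ℤ) : Prop :=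
  y % 4 = 0 ∧ (y % 100 ≠ 0 ∨ y % 400 = 0)

/-- Number of days in month `m` of year `y`. -/
def nbdays (y m : ℤ) : ℤ :=
  if m = 4 ∨ m = 6 ∨ m = 9 ∨ m = 11 then 30
  else if m = 2 then
    (if y % 4 = 0 ∧ (y % 100 ≠ 0 ∨ y % 400 = 0) then 29 else 28)
  else 31

/-- A date is valid iff `1 ≤ m ≤ 12` and `1 ≤ d ≤ nbdays y m`. -/
def Date.valid (D : Date) : Prop :=
  1 ≤ D.m ∧ D.m ≤ 12 ∧ 1 ≤ D.d ∧ D.d ≤ nbdays D.y D.m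

/-- Month addition `(y, m, d) +m n`, with round-down of the day component. -/
def addMonths (D : Date) (n : ℤ) : Date :=
  ⟨D.y + (D.m - 1 + n) / 12,
   1 + (D.m - 1 + n) % 12,
   min D.d (nbdays (D.y + (D.m - 1 + n) / 12) (1 + (D.m - 1 + n) % 12))⟩

/-- A configuration of the small-step day-addition machine:
either a pending addition `D +D n`, or a finished date. -/
inductive Conf where
  | pending (D : Date) (n : ℤ)
  | done (D : Date)

/-- Small-step rules for day addition `+D`. -/
inductive Step : Conf → Conf → Prop where
  | add_days {y m d n : ℤ}
      (h1 : 1 ≤ d + n) (h2 : d + n ≤ nbdays y m) :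
      Step (Conf.pending ⟨y, m, d⟩ n) (Conf.done ⟨y, m, d + n⟩)
  | add_days_over {y m d n : ℤ}
      (h : d + n > nbdays y m) :
      Step (Conf.pending ⟨y, m, d⟩ n)
        (Conf.pending (addMonths ⟨y, m, 1⟩ 1) (n - (nbdays y m - d) - 1))
  | add_days_under1 {y m d n : ℤ}
      (h1 : 1 < d) (h2 : d + n ≤ 0) :
      Step (Conf.pending ⟨y, m, d⟩ n) (Conf.pending ⟨y, m, 1⟩ (d - 1 + n))
  | add_days_under2 {y m n y' m' : ℤ}
      (h1 : 1 + n ≤ 0) (h2 : addMonths ⟨y, m, 1⟩ (-1) = ⟨y', m', 1⟩) :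
      Step (Conf.pending ⟨y, m, 1⟩ n) (Conf.pending ⟨y', m', 1⟩ (n + nbdays y' m'))

/-- Reduction in finitely many steps. -/
def Reduces : Conf → Conf → Prop := Relation.ReflTransGen Step

instance : Nonempty Date := ⟨⟨2000, 3, 1⟩⟩

/-- `addDays D n` is the unique valid normal form of `D +D n`
(when it exists; arbitrary otherwise). -/
noncomputable def addDays (D : Date) (n : ℤ) : Date :=
  Classical.epsilon fun D' : Date =>
    D'.valid ∧ Reduces (Conf.pending D n) (Conf.done D')

/-- Date-period addition `D +P (ny, nm, nd) = (D +m (12·ny + nm)) +D nd`. -/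
noncomputable def addPeriod (D : Date) (P : ℤ × ℤ × ℤ) : Date :=
  addDays (addMonths D (12 * P.1 + P.2.1)) P.2.2

/-- Lexicographic order on dates. -/
def Date.le (a b : Date) : Prop :=
  a.y < b.y ∨ (a.y = b.y ∧ a.m < b.m) ∨ (a.y = b.y ∧ a.m = b.m ∧ a.d ≤ b.d)

/-- Strict lexicographic order on dates. -/
def Date.lt (a b : Date) : Prop :=
  a.y < b.y ∨ (a.y = b.y ∧ a.m < b.m) ∨ (a.y = b.y ∧ a.m = b.m ∧ a.d < b.d)

/-- The epoch date: March 1, 2000. -/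
def epoch : Date := ⟨2000, 3, 1⟩

/-- `toDelta D` is the unique integer `n` with `epoch +D n = D`
(when it exists; arbitrary otherwise). -/
noncomputable def toDelta (D : Date) : ℤ :=
  Classical.epsilon fun n : ℤ => addDays epoch n = D

/-- **The elapsed-months window test and the end-of-window test are not equivalent**:
for `base = (2025, 3, 31)` and `event = (2026, 9, 30)`, both valid with
`base ≤ event`, the day of `event` (30) is less than the day of `base` (31), the
adjusted elapsed-month count `12·(2026 − 2025) + (9 − 3) − 1 = 17` satisfies `17 < 18`,
yet `base +P (0, 18, 0) = (2026, 9, 30) = event`, so `event < base +P (0, 18, 0)` is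
false. -/
lemma nbdays_2026_9 : nbdays 2026 9 = 30 := by norm_num [nbdays]

lemma reduces_inv (c : Conf)
    (h : Reduces (Conf.pending ⟨2026, 9, 30⟩ 0) c) :
    c = Conf.pending ⟨2026, 9, 30⟩ 0 ∨ c = Conf.done ⟨2026, 9, 30⟩ := by
  induction h with
  | refl => left; rfl
  | tail _ hstep ih =>
    rcases ih with rfl | rfl
    · cases hstep with
      | add_days h1 h2 => right; norm_num
      | add_days_over h => exfalso; rw [nbdays_2026_9] at h; omega
      | add_days_under1 h1 h2 => omega
    · exact absurd hstep (by intro h; cases h)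

lemma addDays_key : addDays ⟨2026, 9, 30⟩ 0 = ⟨2026, 9, 30⟩ := by
  have hex : ∃ D' : Date, D'.valid ∧
      Reduces (Conf.pending ⟨2026, 9, 30⟩ 0) (Conf.done D') := by
    refine ⟨⟨2026, 9, 30⟩, ⟨by norm_num, by norm_num, by norm_num,
      by rw [nbdays_2026_9]⟩, ?_⟩
    exact Relation.ReflTransGen.single
      (by have := @Step.add_days 2026 9 30 0 (by norm_num)
            (by rw [nbdays_2026_9]; norm_num)
          simpa using this)
  have hspec := Classical.epsilon_spec hex
  have := reduces_inv _ hspec.2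
  rcases this with h | h
  · cases h
  · unfold addDays
    injection h

theorem window_tests_not_equivalent :
    (Date.mk 2025 3 31).valid ∧ (Date.mk 2026 9 30).valid ∧
    Date.le ⟨2025, 3, 31⟩ ⟨2026, 9, 30⟩ ∧
    (Date.mk 2026 9 30).d < (Date.mk 2025 3 31).d ∧
    (12 * ((2026 : ℤ) - 2025) + (9 - 3) - 1 = 17) ∧
    (17 : ℤ) < 18 ∧
    addPeriod ⟨2025, 3, 31⟩ (0, 18, 0) = ⟨2026, 9, 30⟩ ∧
    ¬ Date.lt ⟨2026, 9, 30⟩ (addPeriod ⟨2025, 3, 31⟩ (0, 18, 0)) := by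
  have hadd : addMonths ⟨2025, 3, 31⟩ 18 = ⟨2026, 9, 30⟩ := by
    simp only [addMonths]
    norm_num [nbdays_2026_9]
  have hP : addPeriod ⟨2025, 3, 31⟩ (0, 18, 0) = ⟨2026, 9, 30⟩ := by
    unfold addPeriod
    norm_num [hadd, addDays_key]
  refine ⟨⟨by norm_num, by norm_num, by norm_num, by norm_num [nbdays]⟩,
    ⟨by norm_num, by norm_num, by norm_num, by rw [nbdays_2026_9]⟩,
    Or.inl (by norm_num), by norm_num, by norm_num, by norm_num, hP, ?_⟩
  rw [hP]
  rintro (h | ⟨_, h⟩ | ⟨_, _, h⟩) <;> omega
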